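/- Let N be a binary normal network on X with reticulated cherry {a,b} (reticulation leaf b), and let g_b be the grandparent of b that is not the parent of a. Then for all c in the visibility set V_{g_b} of g_b and all x in X - (V_{g_b} ∪ {b}), the rooted triple bc|x is displayed by N and the rooted triple ac|b is not displayed by N. -/

import Mathlib

/-- A (candidate) rooted phylogenetic network structure: a directed graph on a
vertex type `V` with a distinguished root and a labelling of (intended) leaves
by elements of `X`.  The combinatorial axioms are imposed by predicates below. -/
structure Network (X : Type) where
  V : Type
  arc : V → V → Prop
  root : V
  leaf : X → V

namespace Network

variable {X : Type} (N : Network X)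

def parents (v : N.V) : Set N.V := {u | N.arc u v}

def children (u : N.V) : Set N.V := {v | N.arc u v}

/-- in-degree 1, out-degree 2 -/
def IsTreeVertex (v : N.V) : Prop := (N.parents v).ncard = 1 ∧ (N.children v).ncard = 2

/-- in-degree 2, out-degree 1 -/
def IsRetic (v : N.V) : Prop := (N.parents v).ncard = 2 ∧ (N.children v).ncard = 1

/-- in-degree 1, out-degree 0 -/
def IsLeafVertex (v : N.V) : Prop := (N.parents v).ncard = 1 ∧ (N.children v).ncard = 0

def Acyclic : Prop := ∀ v : N.V, ¬ Relation.TransGen N.arc v v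

/-- A well-formed binary phylogenetic network (non-degenerate case): a finite
acyclic digraph with a root of in-degree 0 and out-degree 2, leaves of
in-degree 1 and out-degree 0 bijectively labelled by `X`, and all remaining
vertices tree vertices or reticulations. -/
def Wf : Prop :=
  Finite N.V ∧ N.Acyclic ∧
  (N.parents N.root).ncard = 0 ∧ (N.children N.root).ncard = 2 ∧
  Function.Injective N.leaf ∧
  (∀ x : X, N.IsLeafVertex (N.leaf x)) ∧
  (∀ v : N.V, v = N.root ∨ (∃ x, N.leaf x = v) ∨ N.IsTreeVertex v ∨ N.IsRetic v)

/-- The degenerate network on a single leaf: one vertex, no arcs. -/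
def Degenerate : Prop :=
  (∀ v : N.V, v = N.root) ∧ (∀ u v : N.V, ¬ N.arc u v) ∧
  (∃! _x : X, True) ∧ (∀ x : X, N.leaf x = N.root)

def IsBinaryPhylo : Prop := N.Wf ∨ N.Degenerate

/-- `l` is a directed path (a list of successively adjacent vertices) from `u` to `v`. -/
def IsPathFromTo (l : List N.V) (u v : N.V) : Prop :=
  l.Chain' N.arc ∧ l.head? = some u ∧ l.getLast? = some v

/-- `v` is a descendant of `u` (equivalently, `u` is an ancestor of `v`). -/
def Desc (u v : N.V) : Prop := Relation.ReflTransGen N.arc u v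

/-- The visibility set of `u`: those leaf labels `x` such that every directed
path from the root to the leaf labelled `x` traverses `u`. -/
def visSet (u : N.V) : Set X :=
  {x | ∀ l : List N.V, N.IsPathFromTo l N.root (N.leaf x) → u ∈ l}

/-- The cluster set of `u`: leaf labels of leaves that are descendants of `u`. -/
def cluster (u : N.V) : Set X := {x | N.Desc u (N.leaf x)}

/-- A tree path from `u` to `t`: a directed path whose vertices other than the
endpoints are tree vertices. -/
def IsTreePath (l : List N.V) (u t : N.V) : Prop :=
  N.IsPathFromTo l u t ∧ ∀ v ∈ l, v ≠ u → v ≠ t → N.IsTreeVertex v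

/-- Tree-child: every vertex with a child has a child that is a tree vertex or a leaf. -/
def TreeChild : Prop :=
  ∀ v : N.V, (∃ c, N.arc v c) → ∃ c, N.arc v c ∧ (N.IsTreeVertex c ∨ N.IsLeafVertex c)

/-- Some reticulation arc `(u,v)` is a shortcut: there is a directed path from
`u` to `v` avoiding the arc `(u,v)`. -/
def HasShortcut : Prop :=
  ∃ u v, N.arc u v ∧ N.IsRetic v ∧ ∃ w, N.arc u w ∧ w ≠ v ∧ N.Desc w v

/-- Normal: tree-child with no shortcuts. -/
def IsNormal : Prop := N.TreeChild ∧ ¬ N.HasShortcut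

def SiblingRetics (u v : N.V) : Prop :=
  u ≠ v ∧ N.IsRetic u ∧ N.IsRetic v ∧ ∃ p, N.arc p u ∧ N.arc p v

def StackRetics (u v : N.V) : Prop :=
  N.IsRetic u ∧ N.IsRetic v ∧ N.arc u v

/-- `u` and `v` are near-sibling reticulations: some tree vertex `t` has as its
two children `v` and a tree vertex `s` that is a parent of `u`. -/
def NearSiblingRetics (u v : N.V) : Prop :=
  u ≠ v ∧ N.IsRetic u ∧ N.IsRetic v ∧
  ∃ t s, N.IsTreeVertex t ∧ N.IsTreeVertex s ∧ N.arc t s ∧ N.arc t v ∧ N.arc s u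

/-- `u` and `v` are near-stack reticulations: the child of `u` is a tree vertex
that is a parent of `v`. -/
def NearStackRetics (u v : N.V) : Prop :=
  N.IsRetic u ∧ N.IsRetic v ∧ ∃ s, N.arc u s ∧ N.IsTreeVertex s ∧ N.arc s v

def NoNearRetics : Prop :=
  (∀ u v, ¬ N.NearSiblingRetics u v) ∧ (∀ u v, ¬ N.NearStackRetics u v)

/-- `{a,b}` is a cherry: the leaves labelled `a` and `b` share a parent. -/
def Cherry (a b : X) : Prop :=
  a ≠ b ∧ ∃ p, N.arc p (N.leaf a) ∧ N.arc p (N.leaf b)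

/-- `{a,b}` is a reticulated cherry with reticulation leaf `b`. -/
def ReticCherry (a b : X) : Prop :=
  a ≠ b ∧ ∃ pa pb, N.arc pa (N.leaf a) ∧ N.arc pb (N.leaf b) ∧
    N.IsRetic pb ∧ N.arc pa pb

/-- `N` displays the rooted triple `xy|z`: there is a subdigraph of `N` that
is a subdivision of the rooted triple tree with `z` adjacent to the root,
i.e. vertices `p` (the root image) and `q` (the image of the parent of `x,y`)
together with internally disjoint directed paths as below. -/
def Displays (x y z : X) : Prop :=
  x ≠ y ∧ x ≠ z ∧ y ≠ z ∧
  ∃ (p q : N.V) (l0 lx ly lz : List N.V),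
    p ≠ q ∧
    N.IsPathFromTo l0 p q ∧
    N.IsPathFromTo lx q (N.leaf x) ∧
    N.IsPathFromTo ly q (N.leaf y) ∧
    N.IsPathFromTo lz p (N.leaf z) ∧
    (∀ v ∈ lx, v ∈ ly → v = q) ∧
    (∀ v ∈ l0, v ∈ lx ∨ v ∈ ly → v = q) ∧
    (∀ v ∈ lz, v ∈ l0 ∨ v ∈ lx ∨ v ∈ ly → v = p)

/-- `R(N)`: the set of rooted triples displayed by `N`, encoded as ordered
triples `(x, y, z)` standing for `xy|z`. -/
def RDisp : Set (X × X × X) := {t | N.Displays t.1 t.2.1 t.2.2}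

/-- Isomorphism of networks on the same leaf set: a digraph isomorphism fixing
each leaf label. -/
def Isomorphic (N1 N2 : Network X) : Prop :=
  ∃ φ : N1.V ≃ N2.V,
    (∀ u v, N1.arc u v ↔ N2.arc (φ u) (φ v)) ∧ (∀ x, φ (N1.leaf x) = N2.leaf x)

/-- A candidate set for `b` (relative to `a`): a non-empty subset
`W ⊆ X - {a,b}` satisfying conditions (W1)–(W5). -/
def CandidateSet (a b : X) (W : Set X) : Prop :=
  W.Nonempty ∧ a ∉ W ∧ b ∉ W ∧
  -- (W1)
  (∀ c ∈ W, ∀ x : X, x ∉ W → x ≠ b →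
    N.Displays b c x ∧ ¬ N.Displays a c b) ∧
  -- (W2)
  (∀ c ∈ W, ∀ c' ∈ W, c ≠ c' → ¬ N.Displays b c c') ∧
  -- (W3)
  (∀ c ∈ W, ∀ x : X, x ∉ W → x ≠ a → x ≠ b →
    (N.Displays c x a ↔ N.Displays b x a)) ∧
  -- (W4)
  (∀ x y : X, x ∉ W → x ≠ a → x ≠ b → y ∉ W → y ≠ a → y ≠ b →
    N.Displays b x y → ¬ N.Displays a x y → ∀ c ∈ W, N.Displays c x y) ∧
  -- (W5)
  (∀ c ∈ W, (∀ x : X, x ∉ W → x ≠ a → x ≠ b → N.Displays a c x) →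
    ∀ x : X, x ∉ W → x ≠ a → x ≠ b → ¬ N.Displays a x c ∧ ¬ N.Displays a x b)

end Network

section PathHelpers

variable {A : Type*} {r : A → A → Prop}

private lemma mem_of_getLast?_eq {l : List A} {a : A} (h : l.getLast? = some a) : a ∈ l := by
  obtain ⟨h', he⟩ := List.mem_getLast?_eq_getLast (l := l) (x := a) h
  exact he ▸ List.getLast_mem h'

private lemma head?_cases {l : List A} {u : A} (h : l.head? = some u) : ∃ t, l = u :: t := by
  cases l with
  | nil => simp at h
  | cons a t =>
    have hau : a = u := by simpa using h
    exact ⟨t, by rw [hau]⟩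

private lemma chain'_transGen {x y : A} : ∀ {m : List A}, List.Chain' r (x :: m) → y ∈ m →
    Relation.TransGen r x y
  | z :: m', h, hy => by
    simp only [List.Chain'] at h
    rw [List.isChain_cons_cons] at h
    rcases List.mem_cons.1 hy with rfl | hy'
    · exact Relation.TransGen.single h.1
    · exact (Relation.TransGen.single h.1).trans (chain'_transGen h.2 hy')

private lemma path_desc {l : List A} {u v : A} (hc : List.Chain' r l)
    (hh : l.head? = some u) (hl : l.getLast? = some v) : Relation.ReflTransGen r u v := by
  obtain ⟨t, rfl⟩ := head?_cases hh
  rcases List.mem_cons.1 (mem_of_getLast?_eq hl) with rfl | hv'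
  · exact Relation.ReflTransGen.refl
  · exact (chain'_transGen hc hv').to_reflTransGen

private lemma path_suffix {l s t : List A} {v w : A} (hc : List.Chain' r l)
    (hl : l.getLast? = some v) (he : l = s ++ w :: t) :
    List.Chain' r (w :: t) ∧ (w :: t).getLast? = some v :=
  ⟨hc.suffix (by rw [he]; exact List.suffix_append _ _),
   by rw [he, List.getLast?_append_cons] at hl; exact hl⟩

private lemma path_prefix {l s t : List A} {u w : A} (hc : List.Chain' r l)
    (hh : l.head? = some u) (he : l = s ++ w :: t) :
    List.Chain' r (s ++ [w]) ∧ (s ++ [w]).head? = some u ∧ (s ++ [w]).getLast? = some w := by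
  refine ⟨hc.prefix ?_, ?_, ?_⟩
  · rw [he, show s ++ w :: t = (s ++ [w]) ++ t by simp]
    exact List.prefix_append _ _
  · rw [he] at hh
    cases s with
    | nil => exact hh
    | cons a s' => exact hh
  · rw [show s ++ [w] = s ++ w :: [] from rfl, List.getLast?_append_cons]; rfl

private lemma path_compose {l1 l2 : List A} {u v w : A}
    (h1c : List.Chain' r l1) (h1h : l1.head? = some u) (h1l : l1.getLast? = some v)
    (h2c : List.Chain' r l2) (h2h : l2.head? = some v) (h2l : l2.getLast? = some w) :
    ∃ l, List.Chain' r l ∧ l.head? = some u ∧ l.getLast? = some w ∧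
      ∀ z ∈ l, z ∈ l1 ∨ z ∈ l2 := by
  obtain ⟨t, rfl⟩ := head?_cases h2h
  cases t with
  | nil =>
    have hvw : v = w := by simpa using h2l
    exact ⟨l1, h1c, h1h, hvw ▸ h1l, fun z hz => Or.inl hz⟩
  | cons y t' =>
    obtain ⟨t1, rfl⟩ := head?_cases h1h
    refine ⟨(u :: t1) ++ y :: t', ?_, rfl, ?_, ?_⟩
    · show List.IsChain r _
      rw [List.isChain_append]
      refine ⟨h1c, (List.isChain_cons_cons.1 h2c).2, ?_⟩
      intro x hx y' hy'
      rw [Option.mem_def] at hx hy'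
      have hx' : x = v := Option.some.inj (hx.symm.trans h1l)
      have hy'' : y' = y := (Option.some.inj hy').symm
      rw [hx', hy'']
      exact (List.isChain_cons_cons.1 h2c).1
    · rw [List.getLast?_append_cons]
      have h3 : (v :: y :: t').getLast? = some w := h2l
      rwa [List.getLast?_cons_cons] at h3
    · intro z hz
      rcases List.mem_append.1 hz with hz1 | hz2
      · exact Or.inl hz1
      · exact Or.inr (List.mem_cons_of_mem _ hz2)

private lemma exists_parent_mem : ∀ {l : List A} (u v : A), List.Chain' r l →
    l.head? = some u → l.getLast? = some v → u ≠ v → ∃ w ∈ l, r w v := by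
  intro l
  induction l with
  | nil => intro u v _ hh _ _; simp at hh
  | cons a t ih =>
    intro u v hc hh hl hne
    have hau : a = u := by simpa using hh
    subst hau
    cases t with
    | nil => exact absurd (show a = v by simpa using hl) hne
    | cons y t' =>
      have h1 : r a y := (List.isChain_cons_cons.1 hc).1
      have h2 : List.Chain' r (y :: t') := (List.isChain_cons_cons.1 hc).2
      have hl' : (y :: t').getLast? = some v := by rwa [List.getLast?_cons_cons] at hl
      by_cases hyv : y = v
      · subst hyv; exact ⟨a, List.mem_cons_self, h1⟩
      · obtain ⟨w, hw, hwv⟩ := ih y v h2 rfl hl' hyv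
        exact ⟨w, List.mem_cons_of_mem _ hw, hwv⟩

private lemma last_occ (Q : A → Prop) : ∀ {l : List A}, (∃ v ∈ l, Q v) →
    ∃ s w t, l = s ++ w :: t ∧ Q w ∧ ∀ v ∈ t, ¬ Q v := by
  intro l
  induction l using List.reverseRecOn with
  | nil => intro h; simp at h
  | append_singleton l' a ih =>
    intro h
    by_cases hQ : Q a
    · exact ⟨l', a, [], rfl, hQ, by simp⟩
    · obtain ⟨v, hv, hQv⟩ := h
      rcases List.mem_append.1 hv with hv' | hv'
      · obtain ⟨s, w, t, he, hw, ht⟩ := ih ⟨v, hv', hQv⟩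
        refine ⟨s, w, t ++ [a], by rw [he]; simp, hw, ?_⟩
        intro z hz
        rcases List.mem_append.1 hz with h1 | h2
        · exact ht z h1
        · rw [List.mem_singleton.1 h2]; exact hQ
      · rw [List.mem_singleton.1 hv'] at hQv; exact absurd hQv hQ

private lemma eq_of_ncard_one {B : Type*} {s : Set B} {x y : B} (h : s.ncard = 1)
    (hx : x ∈ s) (hy : y ∈ s) : x = y := by
  obtain ⟨a, rfl⟩ := Set.ncard_eq_one.1 h
  rw [Set.mem_singleton_iff] at hx hy; rw [hx, hy]

private lemma mem_two {B : Type*} {s : Set B} {x y z : B} (h : s.ncard = 2)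
    (hx : x ∈ s) (hy : y ∈ s) (hxy : x ≠ y) (hz : z ∈ s) : z = x ∨ z = y := by
  obtain ⟨a, b', hab', rfl⟩ := Set.ncard_eq_two.1 h
  simp only [Set.mem_insert_iff, Set.mem_singleton_iff] at hx hy hz
  rcases hx with rfl | rfl <;> rcases hy with rfl | rfl <;> tauto

end PathHelpers

namespace NetworkAux

open Network

variable {X : Type} {N : Network X}

private lemma no_self_arc (hac : N.Acyclic) {v : N.V} (h : N.arc v v) : False :=
  hac v (Relation.TransGen.single h)

private lemma desc_antisymm (hac : N.Acyclic) {u v : N.V}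
    (h1 : N.Desc u v) (h2 : N.Desc v u) : u = v := by
  rcases Relation.ReflTransGen.cases_head h1 with rfl | ⟨w, hw, hwd⟩
  · rfl
  · exact absurd (Relation.TransGen.head' hw (hwd.trans h2)) (hac u)

private lemma leaf_no_child (hwf : N.Wf) {y : X} {w : N.V} (h : N.arc (N.leaf y) w) : False := by
  have hfin : Finite N.V := hwf.1
  have h0 : (N.children (N.leaf y)).ncard = 0 := (hwf.2.2.2.2.2.1 y).2
  have he : N.children (N.leaf y) = ∅ := (Set.ncard_eq_zero (Set.toFinite _)).1 h0
  have hm : w ∈ N.children (N.leaf y) := h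
  rw [he] at hm
  exact hm

private lemma desc_leaf (hwf : N.Wf) {y : X} {z : N.V} (h : N.Desc (N.leaf y) z) :
    z = N.leaf y := by
  rcases Relation.ReflTransGen.cases_head h with rfl | ⟨w, hw, _⟩
  · rfl
  · exact (leaf_no_child hwf hw).elim

private lemma reach (hwf : N.Wf) (v : N.V) : N.Desc N.root v := by
  have hfin : Finite N.V := hwf.1
  have hirr : IsIrrefl N.V (Relation.TransGen N.arc) := ⟨hwf.2.1⟩
  have htr : IsTrans N.V (Relation.TransGen N.arc) := ⟨fun _ _ _ => Relation.TransGen.trans⟩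
  have hwfd : WellFounded N.arc :=
    Subrelation.wf (fun h => Relation.TransGen.single h)
      (Finite.wellFounded_of_trans_of_irrefl _)
  refine hwfd.induction v ?_
  intro v ih
  have card : ∀ n, (N.parents v).ncard = n → n ≠ 0 → N.Desc N.root v := by
    intro n hcard hn
    have hne : (N.parents v).Nonempty := by
      rw [Set.nonempty_iff_ne_empty]
      intro he
      rw [he, Set.ncard_empty] at hcard
      exact hn hcard.symm
    obtain ⟨u, hu⟩ := hne
    exact (ih u hu).tail hu
  rcases hwf.2.2.2.2.2.2 v with rfl | ⟨y, hy⟩ | ht | hr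
  · exact Relation.ReflTransGen.refl
  · exact card 1 (hy ▸ (hwf.2.2.2.2.2.1 y).1) one_ne_zero
  · exact card 1 ht.1 one_ne_zero
  · exact card 2 hr.1 two_ne_zero

private lemma mem_desc_last {l : List N.V} {v w : N.V} (hc : List.Chain' N.arc l)
    (hl : l.getLast? = some v) (hw : w ∈ l) : N.Desc w v := by
  obtain ⟨s, t, he⟩ := List.append_of_mem hw
  obtain ⟨hc', hl'⟩ := path_suffix hc hl he
  exact path_desc hc' rfl hl'

private lemma mem_desc_head {l : List N.V} {u w : N.V} (hc : List.Chain' N.arc l)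
    (hh : l.head? = some u) (hw : w ∈ l) : N.Desc u w := by
  obtain ⟨t, rfl⟩ := head?_cases hh
  rcases List.mem_cons.1 hw with rfl | hw'
  · exact Relation.ReflTransGen.refl
  · exact (chain'_transGen hc hw').to_reflTransGen

private lemma desc_path {u v : N.V} (h : N.Desc u v) :
    ∃ l, List.Chain' N.arc l ∧ l.head? = some u ∧ l.getLast? = some v := by
  induction h with
  | refl => exact ⟨[u], List.isChain_singleton u, rfl, rfl⟩
  | tail hd ha ih =>
    obtain ⟨l, hc, hh, hl⟩ := ih
    obtain ⟨l', h1, h2, h3, _⟩ := path_compose hc hh hl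
      (List.isChain_pair.2 ha) rfl rfl
    exact ⟨l', h1, h2, h3⟩

end NetworkAux

open NetworkAux

/-- Lemma (ii): for a reticulated cherry `{a,b}` with reticulation leaf `b` in
a binary normal network `N`, with `g_b` the grandparent of `b` other than the
parent `p_a` of `a`: for all `c ∈ V_{g_b}` and `x ∈ X - (V_{g_b} ∪ {b})`, `N`
displays `bc|x` and does not display `ac|b`. -/
theorem vgb_property_ii {X : Type} (N : Network X)
    (h : N.IsBinaryPhylo) (hn : N.IsNormal) (a b : X) (hab : a ≠ b)
    (pa pb gb : N.V)
    (hpa : N.arc pa (N.leaf a)) (hpb : N.arc pb (N.leaf b))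
    (hretic : N.IsRetic pb) (hpapb : N.arc pa pb) (hgbpb : N.arc gb pb)
    (hgbpa : gb ≠ pa) :
    ∀ c ∈ N.visSet gb, ∀ x : X, x ∉ N.visSet gb → x ≠ b →
      N.Displays b c x ∧ ¬ N.Displays a c b := by
  rcases h with hwf | hdeg
  case inr => exact absurd hpb (hdeg.2.1 _ _)
  obtain ⟨hfin', hacyc, hrp, hrc, hinj, hlv, hclass⟩ := hwf
  have hwf : N.Wf := ⟨hfin', hacyc, hrp, hrc, hinj, hlv, hclass⟩
  have hnoself : ∀ {v : N.V}, N.arc v v → False := fun h => no_self_arc hacyc h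
  have hchpb : ∀ {w : N.V}, N.arc pb w → w = N.leaf b :=
    fun hw => eq_of_ncard_one hretic.2 hw hpb
  have hdescpb : ∀ {z : N.V}, N.Desc pb z → z = pb ∨ z = N.leaf b := by
    intro z hz
    rcases Relation.ReflTransGen.cases_head hz with rfl | ⟨w, hw, hwd⟩
    · exact Or.inl rfl
    · rw [hchpb hw] at hwd
      exact Or.inr (desc_leaf hwf hwd)
  have hleafne : ∀ (y : X), N.leaf y ≠ pb := by
    intro y hy
    exact leaf_no_child hwf (show N.arc (N.leaf y) (N.leaf b) by rw [hy]; exact hpb)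
  have hparpb : ∀ {w : N.V}, N.arc w pb → w = pa ∨ w = gb :=
    fun hw => mem_two hretic.1 hpapb hgbpb hgbpa.symm hw
  have hnotdesc : ¬ N.Desc gb pa := by
    intro hd
    rcases Relation.ReflTransGen.cases_head hd with he | ⟨w, hw, hwd⟩
    · exact hgbpa he
    · have hwpb : w ≠ pb := by
        rintro rfl
        rcases hdescpb hwd with h1 | h1
        · exact hnoself (h1 ▸ hpapb)
        · exact leaf_no_child hwf (h1 ▸ hpapb)
      exact hn.2 ⟨gb, pb, hgbpb, hretic, w, hw, hwpb, hwd.tail hpapb⟩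
  have hgbnpb : gb ≠ pb := fun he => hnoself (show N.arc pb pb by rw [← he] at hgbpb ⊢; exact hgbpb)
  have hgbnlb : gb ≠ N.leaf b := fun he =>
    leaf_no_child hwf (show N.arc (N.leaf b) pb by rw [← he]; exact hgbpb)
  have hbnotvis : b ∉ N.visSet gb := by
    intro hb
    obtain ⟨R, hRc, hRh, hRl⟩ := desc_path (reach hwf pa)
    obtain ⟨F, hFc, hFh, hFl, hFm⟩ := path_compose hRc hRh hRl
      (show List.Chain' N.arc [pa, pb, N.leaf b] from
        List.isChain_cons_cons.2 ⟨hpapb, List.isChain_pair.2 hpb⟩) rfl rfl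
    have hgbF : gb ∈ F := hb F ⟨hFc, hFh, hFl⟩
    rcases hFm gb hgbF with h1 | h1
    · exact hnotdesc (mem_desc_last hRc hRl h1)
    · rcases (by simpa using h1 : gb = pa ∨ gb = pb ∨ gb = N.leaf b) with h2 | h2 | h2
      · exact hgbpa h2
      · exact hgbnpb h2
      · exact hgbnlb h2
  have hvisdesc : ∀ {y : X}, y ∈ N.visSet gb →
      ∃ m, List.Chain' N.arc (gb :: m) ∧ (gb :: m).getLast? = some (N.leaf y) ∧ gb ∉ m := by
    intro y hy
    obtain ⟨F, hFc, hFh, hFl⟩ := desc_path (reach hwf (N.leaf y))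
    have hgbF : gb ∈ F := hy F ⟨hFc, hFh, hFl⟩
    obtain ⟨s, t, he⟩ := List.append_of_mem hgbF
    obtain ⟨hc', hl'⟩ := path_suffix hFc hFl he
    exact ⟨t, hc', hl', fun hmem => hacyc gb (chain'_transGen hc' hmem)⟩
  intro c hcvis x hxvis hxb
  have hbc : b ≠ c := fun he => hbnotvis (he ▸ hcvis)
  have hbx : b ≠ x := fun he => hxb he.symm
  have hcx : c ≠ x := fun he => hxvis (he ▸ hcvis)
  constructor
  · -- N.Displays b c x
    obtain ⟨L, hLpath, hgbL⟩ : ∃ l, N.IsPathFromTo l N.root (N.leaf x) ∧ gb ∉ l := by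
      by_contra hcon
      push_neg at hcon
      exact hxvis (fun l hl => hcon l hl)
    obtain ⟨hLc, hLh, hLl⟩ := hLpath
    obtain ⟨P, hPc, hPh, hPl⟩ := desc_path (reach hwf gb)
    have hrootL : N.root ∈ L := List.mem_of_mem_head? (l := L) (by rw [hLh]; rfl)
    have hrootP : N.root ∈ P := List.mem_of_mem_head? (l := P) (by rw [hPh]; rfl)
    obtain ⟨L1, p, L2, hLe, hpP, hL2P⟩ := last_occ (· ∈ P) ⟨N.root, hrootL, hrootP⟩
    obtain ⟨hzc, hzl⟩ := path_suffix hLc hLl hLe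
    obtain ⟨P1, P2, hPe⟩ := List.append_of_mem hpP
    obtain ⟨h0c, h0l⟩ := path_suffix hPc hPl hPe
    obtain ⟨M, hMc, hMl, hgbM⟩ := hvisdesc hcvis
    have hpL : p ∈ L := by
      rw [hLe]; exact List.mem_append_right _ (List.mem_cons_self)
    have hpgb : p ≠ gb := fun he => hgbL (he ▸ hpL)
    have hlzL : ∀ v ∈ p :: L2, v ∈ L := by
      intro v hv; rw [hLe]; exact List.mem_append_right _ hv
    have hl0P : ∀ v ∈ p :: P2, v ∈ P := by
      intro v hv; rw [hPe]; exact List.mem_append_right _ hv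
    refine ⟨hbc, hbx, hcx, p, gb, p :: P2, [gb, pb, N.leaf b], gb :: M, p :: L2, hpgb,
      ⟨h0c, rfl, h0l⟩,
      ⟨List.isChain_cons_cons.2 ⟨hgbpb, List.isChain_pair.2 hpb⟩, rfl, rfl⟩,
      ⟨hMc, rfl, hMl⟩, ⟨hzc, rfl, hzl⟩, ?_, ?_, ?_⟩
    · intro v hv hvM
      rcases (by simpa using hv : v = gb ∨ v = pb ∨ v = N.leaf b) with hveq | hveq | hveq
      · exact hveq
      · rw [hveq] at hvM
        rcases hdescpb (mem_desc_last hMc hMl hvM) with h1 | h1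
        · exact absurd h1 (hleafne c)
        · exact absurd (hinj h1) hbc.symm
      · rw [hveq] at hvM
        exact absurd (hinj (desc_leaf hwf (mem_desc_last hMc hMl hvM))) hbc.symm
    · intro v hv hvor
      have hvgb : N.Desc v gb := mem_desc_last hPc hPl (hl0P v hv)
      rcases hvor with hvx | hvy
      · rcases (by simpa using hvx : v = gb ∨ v = pb ∨ v = N.leaf b) with hveq | hveq | hveq
        · exact hveq
        · rw [hveq] at hvgb
          rcases hdescpb hvgb with h1 | h1
          · exact absurd h1 hgbnpb
          · exact absurd h1 hgbnlb
        · rw [hveq] at hvgb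
          exact absurd (desc_leaf hwf hvgb) hgbnlb
      · exact desc_antisymm hacyc hvgb (mem_desc_head hMc rfl hvy)
    · intro v hv hvor
      rcases hvor with hv0 | hvx | hvy
      · rcases List.mem_cons.1 hv with rfl | hv2
        · rfl
        · exact absurd (hl0P v hv0) (hL2P v hv2)
      · rcases (by simpa using hvx : v = gb ∨ v = pb ∨ v = N.leaf b) with hveq | hveq | hveq
        · exact absurd (hlzL v hv) (by rw [hveq]; exact hgbL)
        · rw [hveq] at hv
          rcases hdescpb (mem_desc_last hzc hzl hv) with h1 | h1
          · exact absurd h1 (hleafne x)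
          · exact absurd (hinj h1) hxb
        · rw [hveq] at hv
          exact absurd (hinj (desc_leaf hwf (mem_desc_last hzc hzl hv))) hxb
      · rcases List.mem_cons.1 hvy with hveq | hvM
        · exact absurd (hlzL v hv) (by rw [hveq]; exact hgbL)
        · exfalso
          obtain ⟨S1, S2, hSe⟩ := List.append_of_mem (hlzL v hv)
          obtain ⟨hprC, hprH, hprL⟩ := path_prefix hLc hLh hSe
          obtain ⟨T1, T2, hTe⟩ := List.append_of_mem hvM
          have hMe : gb :: M = (gb :: T1) ++ v :: T2 := by rw [hTe]; rfl
          obtain ⟨hsfC, hsfL⟩ := path_suffix hMc hMl hMe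
          obtain ⟨F, hFc, hFh, hFl, hFm⟩ := path_compose hprC hprH hprL hsfC rfl hsfL
          have hgbF : gb ∈ F := hcvis F ⟨hFc, hFh, hFl⟩
          rcases hFm gb hgbF with h1 | h1
          · have hgL : gb ∈ L := by
              rw [hSe]
              rcases List.mem_append.1 h1 with h2 | h2
              · exact List.mem_append_left _ h2
              · rw [List.mem_singleton.1 h2]
                exact List.mem_append_right _ (List.mem_cons_self)
            exact hgbL hgL
          · rcases List.mem_cons.1 h1 with hveq | h2
            · exact hgbL (by rw [hveq]; exact hlzL v hv)
            · exact hgbM (by rw [hTe]; exact List.mem_append_right _ (List.mem_cons_of_mem _ h2))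
  · -- ¬ N.Displays a c b
    rintro ⟨hac, hab2, hcb, p, q, l0, lx, ly, lz, hpq, ⟨h0c, h0h, h0l⟩, ⟨hxc, hxh, hxl⟩,
      ⟨hyc, hyh, hyl⟩, ⟨hzc, hzh, hzl⟩, dxy, d0, dz⟩
    have hqa : q ≠ N.leaf a := by
      rintro rfl
      exact hac (hinj (desc_leaf hwf (path_desc hyc hyh hyl))).symm
    have hpaq : pa ∈ lx := by
      obtain ⟨w, hwmem, hw⟩ := exists_parent_mem q (N.leaf a) hxc hxh hxl hqa
      have hwe : w = pa := eq_of_ncard_one (hlv a).1 hw hpa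
      exact hwe ▸ hwmem
    have hqpa : N.Desc q pa := mem_desc_head hxc hxh hpaq
    have hpleafb : p ≠ N.leaf b := by
      rintro rfl
      rcases Relation.ReflTransGen.cases_head (path_desc h0c h0h h0l) with he | ⟨w, hw, _⟩
      · exact hpq he
      · exact leaf_no_child hwf hw
    have hpbz : pb ∈ lz := by
      obtain ⟨w, hwmem, hw⟩ := exists_parent_mem p (N.leaf b) hzc hzh hzl hpleafb
      have hwe : w = pb := eq_of_ncard_one (hlv b).1 hw hpb
      exact hwe ▸ hwmem
    have hqpb' : q ≠ pb := by
      rintro rfl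
      rcases hdescpb (path_desc hyc hyh hyl) with h1 | h1
      · exact hleafne c h1
      · exact hcb (hinj h1)
    have hqleafb : q ≠ N.leaf b := by
      rintro rfl
      exact hcb (hinj (desc_leaf hwf (path_desc hyc hyh hyl)))
    have hppb : p ≠ pb := by
      rintro rfl
      rcases hdescpb (path_desc h0c h0h h0l) with h1 | h1
      · exact hpq h1.symm
      · exact hqleafb h1
    obtain ⟨Z1, Z2, hZe⟩ := List.append_of_mem hpbz
    obtain ⟨hprC, hprH, hprL⟩ := path_prefix hzc hzh hZe
    obtain ⟨w, hwmem, hwarc⟩ := exists_parent_mem p pb hprC hprH hprL hppb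
    have hwlz : w ∈ lz := by
      rw [hZe]
      rcases List.mem_append.1 hwmem with h1 | h1
      · exact List.mem_append_left _ h1
      · rw [List.mem_singleton.1 h1]
        exact List.mem_append_right _ (List.mem_cons_self)
    rcases hparpb hwarc with hweq | hweq
    · rw [hweq] at hwlz
      have hpap : pa = p := dz pa hwlz (Or.inr (Or.inl hpaq))
      rcases Relation.ReflTransGen.cases_head (path_desc h0c h0h h0l) with he | ⟨w', hw', hwd'⟩
      · exact hpq he
      · have hw'pa : N.arc pa w' := by rw [hpap]; exact hw'
        have hcard : (N.children pa).ncard = 2 := by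
          rcases hclass pa with he | ⟨y, hy⟩ | ht | hr
          · rw [he]; exact hrc
          · exact (leaf_no_child hwf
              (show N.arc (N.leaf y) (N.leaf a) by rw [hy]; exact hpa)).elim
          · exact ht.2
          · exact absurd (eq_of_ncard_one hr.2 hpa hpapb) (hleafne a)
        rcases mem_two hcard hpa hpapb (hleafne a) hw'pa with hw'eq | hw'eq
        · rw [hw'eq] at hwd'
          exact hqa (desc_leaf hwf hwd')
        · rw [hw'eq] at hwd'
          rcases hdescpb hwd' with h1 | h1
          · exact hqpb' h1
          · exact hqleafb h1
    · rw [hweq] at hwlz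
      by_cases hgp : gb = p
      · have hgq : N.Desc gb q := by rw [hgp]; exact path_desc h0c h0h h0l
        exact hnotdesc (hgq.trans hqpa)
      · have hgbnot : ¬ (gb ∈ l0 ∨ gb ∈ lx ∨ gb ∈ ly) := fun hh => hgp (dz gb hwlz hh)
        obtain ⟨R, hRc, hRh, hRl⟩ := desc_path (reach hwf p)
        obtain ⟨F1, hF1c, hF1h, hF1l, hF1m⟩ := path_compose hRc hRh hRl h0c h0h h0l
        obtain ⟨F, hFc, hFh, hFl, hFm⟩ := path_compose hF1c hF1h hF1l hyc hyh hyl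
        have hgbF : gb ∈ F := hcvis F ⟨hFc, hFh, hFl⟩
        rcases hFm gb hgbF with h1 | h1
        · rcases hF1m gb h1 with h2 | h2
          · have hd1 : N.Desc gb p := mem_desc_last hRc hRl h2
            exact hnotdesc ((hd1.trans (path_desc h0c h0h h0l)).trans hqpa)
          · exact hgbnot (Or.inl h2)
        · exact hgbnot (Or.inr (Or.inr h1))
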